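/- arXiv:1909.12096 — 2 statements merged into one kernel-verified Lean document; each statement's English description precedes it below -/
import Mathlib

section
/- For complex numbers z, w and a real number p with 2 < p < ∞, one has |z+w|^p + |z−w|^p ≥ 2(|z|^p + |w|^p), with equality if and only if zw = 0. -/
theorem aux_strict (x y r : ℝ) (hx : 0 < x) (hy : 0 < y) (hr : 1 < r) :
    x ^ r + y ^ r < (x + y) ^ r := by
  have hr1 : (0:ℝ) < r - 1 := by linarith
  have hxy : 0 < x + y := by linarith
  have ex : x ^ r = x * x ^ (r - 1) := by
    rw [← Real.rpow_one_add' (le_of_lt hx) (by linarith)]; ring_nf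
  have ey : y ^ r = y * y ^ (r - 1) := by
    rw [← Real.rpow_one_add' (le_of_lt hy) (by linarith)]; ring_nf
  have exy : (x + y) ^ r = (x + y) * (x + y) ^ (r - 1) := by
    rw [← Real.rpow_one_add' (le_of_lt hxy) (by linarith)]; ring_nf
  rw [ex, ey, exy]
  have h1 : x * x ^ (r - 1) < x * (x + y) ^ (r - 1) :=
    mul_lt_mul_of_pos_left (Real.rpow_lt_rpow hx.le (by linarith) hr1) hx
  have h2 : y * y ^ (r - 1) < y * (x + y) ^ (r - 1) :=
    mul_lt_mul_of_pos_left (Real.rpow_lt_rpow hy.le (by linarith) hr1) hy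
  nlinarith

theorem aux_le (x y r : ℝ) (hx : 0 ≤ x) (hy : 0 ≤ y) (hr : 1 ≤ r) :
    x ^ r + y ^ r ≤ (x + y) ^ r := by
  rcases eq_or_lt_of_le hx with h | hx'
  · simp [← h, Real.zero_rpow (by linarith : r ≠ 0)]
  rcases eq_or_lt_of_le hy with h | hy'
  · simp [← h, Real.zero_rpow (by linarith : r ≠ 0)]
  rcases eq_or_lt_of_le hr with h | hr'
  · simp [← h]
  exact (aux_strict x y r hx' hy' hr').le

-- midpoint convexity of rpow
theorem aux_conv (u v r : ℝ) (hu : 0 ≤ u) (hv : 0 ≤ v) (hr : 1 ≤ r) :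
    ((u + v) / 2) ^ r ≤ (u ^ r + v ^ r) / 2 := by
  have h := (convexOn_rpow hr).2 (Set.mem_Ici.2 hu) (Set.mem_Ici.2 hv)
    (by norm_num : (0:ℝ) ≤ (1:ℝ)/2) (by norm_num : (0:ℝ) ≤ (1:ℝ)/2) (by norm_num)
  simp only [smul_eq_mul] at h
  calc ((u + v) / 2) ^ r = ((1:ℝ)/2 * u + (1:ℝ)/2 * v) ^ r := by ring_nf
    _ ≤ (1:ℝ)/2 * u ^ r + (1:ℝ)/2 * v ^ r := h
    _ = (u ^ r + v ^ r) / 2 := by ring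

theorem aux_sq_rpow (a p : ℝ) (ha : 0 ≤ a) : (a * a) ^ (p / 2) = a ^ p := by
  have h2 : a * a = a ^ (2:ℝ) := by
    rw [show ((2:ℝ)) = ((2:ℕ):ℝ) by norm_num, Real.rpow_natCast]; ring
  rw [h2, ← Real.rpow_mul ha]
  congr 1; ring

/-- For complex numbers `z, w` and `2 < p < ∞`, one has
`|z+w|^p + |z−w|^p ≥ 2(|z|^p + |w|^p)`, with equality iff `zw = 0`. -/
theorem stmt3 (z w : ℂ) (p : ℝ) (hp : 2 < p) :
    2 * (‖z‖ ^ p + ‖w‖ ^ p)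
      ≤ ‖z + w‖ ^ p + ‖z - w‖ ^ p ∧
    (‖z + w‖ ^ p + ‖z - w‖ ^ p
      = 2 * (‖z‖ ^ p + ‖w‖ ^ p) ↔ z * w = 0) := by
  set a := ‖z‖ with haz
  set b := ‖w‖ with hbw
  set A := ‖z + w‖ with hA
  set B := ‖z - w‖ with hB
  have ha : 0 ≤ a := norm_nonneg z
  have hb : 0 ≤ b := norm_nonneg w
  have hA0 : 0 ≤ A := norm_nonneg _
  have hB0 : 0 ≤ B := norm_nonneg _
  have hr : 1 ≤ p / 2 := by linarith
  -- parallelogram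
  have par : A * A + B * B = 2 * (a * a + b * b) := by
    have h1 : A ^ 2 = Complex.normSq (z + w) := Complex.sq_norm _
    have h2 : B ^ 2 = Complex.normSq (z - w) := Complex.sq_norm _
    have h3 : a ^ 2 = Complex.normSq z := Complex.sq_norm _
    have h4 : b ^ 2 = Complex.normSq w := Complex.sq_norm _
    have h5 := Complex.normSq_add z w
    have h6 := Complex.normSq_sub z w
    nlinarith [sq_nonneg A, sq_nonneg B]
  -- step 2 : 2 * (a*a+b*b)^(p/2) ≤ A^p + B^p
  have step2 : 2 * (a * a + b * b) ^ (p / 2) ≤ A ^ p + B ^ p := by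
    have hmid : a * a + b * b = (A * A + B * B) / 2 := by linarith
    have := aux_conv (A * A) (B * B) (p / 2)
      (mul_nonneg hA0 hA0) (mul_nonneg hB0 hB0) hr
    rw [aux_sq_rpow A p hA0, aux_sq_rpow B p hB0] at this
    rw [hmid]
    linarith
  -- step 1 (weak)
  have step1 : a ^ p + b ^ p ≤ (a * a + b * b) ^ (p / 2) := by
    have := aux_le (a * a) (b * b) (p / 2) (mul_nonneg ha ha) (mul_nonneg hb hb) hr
    rwa [aux_sq_rpow a p ha, aux_sq_rpow b p hb] at this
  have main : 2 * (a ^ p + b ^ p) ≤ A ^ p + B ^ p := by linarith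
  refine ⟨main, ?_, ?_⟩
  · -- equality → z * w = 0
    intro heq
    by_contra hzw
    have hz : z ≠ 0 := fun h => hzw (by simp [h])
    have hw : w ≠ 0 := fun h => hzw (by simp [h])
    have ha' : 0 < a := norm_pos_iff.mpr hz
    have hb' : 0 < b := norm_pos_iff.mpr hw
    have hstrict : a ^ p + b ^ p < (a * a + b * b) ^ (p / 2) := by
      have := aux_strict (a * a) (b * b) (p / 2)
        (mul_pos ha' ha') (mul_pos hb' hb') (by linarith)
      rwa [aux_sq_rpow a p ha, aux_sq_rpow b p hb] at this
    linarith
  · -- z * w = 0 → equality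
    intro hzw
    rcases mul_eq_zero.mp hzw with h | h
    · subst h
      simp only [haz, hA, hB, zero_add, zero_sub, map_zero, map_neg_eq_map, norm_zero, norm_neg]
      rw [Real.zero_rpow (by positivity : p ≠ 0)]
      ring
    · subst h
      simp only [hbw, hA, hB, add_zero, sub_zero, map_zero, norm_zero]
      rw [Real.zero_rpow (by positivity : p ≠ 0)]
      ring
end

section
/- Let p ∈ [1,∞) with p ≠ 2, let (X, μ) be a measure space, and let T : L^p(μ) → L^p(μ) be a linear isometry. If ξ, η ∈ L^p(μ) satisfy ξ·η = 0 almost everywhere, then T(ξ)·T(η) = 0 almost everywhere. -/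
open MeasureTheory
open scoped ENNReal NNReal

namespace Stmt4Aux

private lemma piece_lt {a b q : ℝ} (ha : 0 < a) (hb : 0 < b) (hq1 : q < 1) :
    (a + b) ^ q * (a / (a + b)) < a ^ q := by
  have hab : 0 < a + b := by linarith
  have h1 : a / (a + b) < 1 := by rw [div_lt_one hab]; linarith
  have h2 : 0 < a / (a + b) := by positivity
  have h3 : a / (a + b) < (a / (a + b)) ^ q := by
    nth_rewrite 1 [← Real.rpow_one (a / (a + b))]
    exact Real.rpow_lt_rpow_of_exponent_gt h2 h1 hq1
  calc (a + b) ^ q * (a / (a + b)) < (a + b) ^ q * (a / (a + b)) ^ q :=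
        (mul_lt_mul_iff_right₀ (Real.rpow_pos_of_pos hab q)).mpr h3
    _ = a ^ q := by
        rw [Real.div_rpow ha.le hab.le, mul_comm, div_mul_cancel₀]
        exact (Real.rpow_pos_of_pos hab q).ne'

private lemma piece_gt {a b q : ℝ} (ha : 0 < a) (hb : 0 < b) (hq1 : 1 < q) :
    a ^ q < (a + b) ^ q * (a / (a + b)) := by
  have hab : 0 < a + b := by linarith
  have h1 : a / (a + b) < 1 := by rw [div_lt_one hab]; linarith
  have h2 : 0 < a / (a + b) := by positivity
  have h3 : (a / (a + b)) ^ q < a / (a + b) := by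
    nth_rewrite 2 [← Real.rpow_one (a / (a + b))]
    exact Real.rpow_lt_rpow_of_exponent_gt h2 h1 hq1
  calc a ^ q = (a + b) ^ q * (a / (a + b)) ^ q := by
        rw [Real.div_rpow ha.le hab.le, mul_comm, div_mul_cancel₀]
        exact (Real.rpow_pos_of_pos hab q).ne'
    _ < (a + b) ^ q * (a / (a + b)) :=
        (mul_lt_mul_iff_right₀ (Real.rpow_pos_of_pos hab q)).mpr h3

private lemma split_sum {s t q : ℝ} (hst : 0 < s + t) :
    (s + t) ^ q * (s / (s + t)) + (s + t) ^ q * (t / (s + t)) = (s + t) ^ q := by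
  rw [← mul_add, ← add_div, div_self hst.ne', mul_one]

private lemma strict_subadd {s t q : ℝ} (hs : 0 < s) (ht : 0 < t) (hq1 : q < 1) :
    (s + t) ^ q < s ^ q + t ^ q := by
  have h1 := piece_lt hs ht hq1
  have h2 := piece_lt ht hs hq1
  rw [add_comm t s] at h2
  have h3 := split_sum (q := q) (by linarith : (0:ℝ) < s + t)
  linarith

private lemma strict_superadd {s t q : ℝ} (hs : 0 < s) (ht : 0 < t) (hq1 : 1 < q) :
    s ^ q + t ^ q < (s + t) ^ q := by
  have h1 := piece_gt hs ht hq1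
  have h2 := piece_gt ht hs hq1
  rw [add_comm t s] at h2
  have h3 := split_sum (q := q) (by linarith : (0:ℝ) < s + t)
  linarith

private lemma sq_norm (z w : ℂ) : ‖z + w‖ ^ 2 + ‖z - w‖ ^ 2 = 2 * (‖z‖ ^ 2 + ‖w‖ ^ 2) := by
  have := parallelogram_law_with_norm ℂ z w
  simp only [pow_two]; linarith

private lemma rpow_sq {a : ℝ} (ha : 0 ≤ a) (p : ℝ) : (a ^ 2) ^ (p / 2) = a ^ p := by
  rw [← Real.rpow_natCast a 2, ← Real.rpow_mul ha]
  congr 1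
  push_cast
  ring

/-- Clarkson-type pointwise inequality for `1 ≤ p < 2`. -/
private lemma real_le {p : ℝ} (hp1 : 1 ≤ p) (hp2 : p < 2) (z w : ℂ) :
    ‖z + w‖ ^ p + ‖z - w‖ ^ p ≤ 2 * (‖z‖ ^ 2 + ‖w‖ ^ 2) ^ (p / 2) := by
  have hq0 : 0 < p / 2 := by linarith
  have hq1 : p / 2 < 1 := by linarith
  have hcon := (Real.strictConcaveOn_rpow hq0 hq1).concaveOn
  have h := hcon.2 (Set.mem_Ici.mpr (sq_nonneg ‖z + w‖)) (Set.mem_Ici.mpr (sq_nonneg ‖z - w‖))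
      (by norm_num : (0:ℝ) ≤ 1/2) (by norm_num : (0:ℝ) ≤ 1/2) (by norm_num)
  simp only [smul_eq_mul] at h
  rw [rpow_sq (norm_nonneg _) p, rpow_sq (norm_nonneg _) p] at h
  have harg : 1/2 * ‖z + w‖ ^ 2 + 1/2 * ‖z - w‖ ^ 2 = ‖z‖ ^ 2 + ‖w‖ ^ 2 := by
    have := sq_norm z w; linarith
  rw [harg] at h
  linarith

/-- Reverse inequality for `p > 2`. -/
private lemma real_ge {p : ℝ} (hp2 : 2 < p) (z w : ℂ) :
    2 * (‖z‖ ^ 2 + ‖w‖ ^ 2) ^ (p / 2) ≤ ‖z + w‖ ^ p + ‖z - w‖ ^ p := by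
  have hq1 : 1 ≤ p / 2 := by linarith
  have hcon := convexOn_rpow hq1
  have h := hcon.2 (Set.mem_Ici.mpr (sq_nonneg ‖z + w‖)) (Set.mem_Ici.mpr (sq_nonneg ‖z - w‖))
      (by norm_num : (0:ℝ) ≤ 1/2) (by norm_num : (0:ℝ) ≤ 1/2) (by norm_num)
  simp only [smul_eq_mul] at h
  rw [rpow_sq (norm_nonneg _) p, rpow_sq (norm_nonneg _) p] at h
  have harg : 1/2 * ‖z + w‖ ^ 2 + 1/2 * ‖z - w‖ ^ 2 = ‖z‖ ^ 2 + ‖w‖ ^ 2 := by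
    have := sq_norm z w; linarith
  rw [harg] at h
  linarith

private lemma main_lt {p : ℝ} (hp1 : 1 ≤ p) (hp2 : p < 2) (z w : ℂ) :
    ‖z + w‖ ^ p + ‖z - w‖ ^ p ≤ 2 * ‖z‖ ^ p + 2 * ‖w‖ ^ p := by
  have h1 := real_le hp1 hp2 z w
  have hq0 : 0 < p / 2 := by linarith
  have hq1 : p / 2 < 1 := by linarith
  have hpne : p ≠ 0 := by linarith
  have h2 : (‖z‖ ^ 2 + ‖w‖ ^ 2) ^ (p / 2) ≤ ‖z‖ ^ p + ‖w‖ ^ p := by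
    rcases eq_or_lt_of_le (norm_nonneg z) with h | h
    · rw [← h, zero_pow (by norm_num : (2:ℕ) ≠ 0), zero_add, Real.zero_rpow hpne, zero_add,
        rpow_sq (norm_nonneg _)]
    rcases eq_or_lt_of_le (norm_nonneg w) with h' | h'
    · rw [← h', zero_pow (by norm_num : (2:ℕ) ≠ 0), add_zero, Real.zero_rpow hpne, add_zero,
        rpow_sq (norm_nonneg _)]
    have := strict_subadd (pow_pos h 2) (pow_pos h' 2) hq1
    rw [rpow_sq (norm_nonneg z) p, rpow_sq (norm_nonneg w) p] at this
    exact this.le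
  linarith

private lemma main_gt {p : ℝ} (hp2 : 2 < p) (z w : ℂ) :
    2 * ‖z‖ ^ p + 2 * ‖w‖ ^ p ≤ ‖z + w‖ ^ p + ‖z - w‖ ^ p := by
  have h1 := real_ge hp2 z w
  have hq0 : 0 < p / 2 := by linarith
  have hq1 : 1 < p / 2 := by linarith
  have hpne : p ≠ 0 := by linarith
  have h2 : ‖z‖ ^ p + ‖w‖ ^ p ≤ (‖z‖ ^ 2 + ‖w‖ ^ 2) ^ (p / 2) := by
    rcases eq_or_lt_of_le (norm_nonneg z) with h | h
    · rw [← h, zero_pow (by norm_num : (2:ℕ) ≠ 0), zero_add, Real.zero_rpow hpne, zero_add,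
        rpow_sq (norm_nonneg _)]
    rcases eq_or_lt_of_le (norm_nonneg w) with h' | h'
    · rw [← h', zero_pow (by norm_num : (2:ℕ) ≠ 0), add_zero, Real.zero_rpow hpne, add_zero,
        rpow_sq (norm_nonneg _)]
    have := strict_superadd (pow_pos h 2) (pow_pos h' 2) hq1
    rw [rpow_sq (norm_nonneg z) p, rpow_sq (norm_nonneg w) p] at this
    exact this.le
  linarith

private lemma main_eq_imp {p : ℝ} (hp1 : 1 ≤ p) (hp2 : p ≠ 2) {z w : ℂ}
    (heq : ‖z + w‖ ^ p + ‖z - w‖ ^ p = 2 * ‖z‖ ^ p + 2 * ‖w‖ ^ p) : z * w = 0 := by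
  by_contra hzw
  have hz : z ≠ 0 := fun h => hzw (by simp [h])
  have hw : w ≠ 0 := fun h => hzw (by simp [h])
  have hz2 : 0 < ‖z‖ ^ 2 := pow_pos (norm_pos_iff.mpr hz) 2
  have hw2 : 0 < ‖w‖ ^ 2 := pow_pos (norm_pos_iff.mpr hw) 2
  rcases lt_or_gt_of_ne hp2 with hlt | hgt
  · have h1 := real_le hp1 hlt z w
    have h2 := strict_subadd hz2 hw2 (by linarith : p / 2 < 1)
    rw [rpow_sq (norm_nonneg z) p, rpow_sq (norm_nonneg w) p] at h2
    linarith
  · have h1 := real_ge hgt z w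
    have h2 := strict_superadd hz2 hw2 (by linarith : 1 < p / 2)
    rw [rpow_sq (norm_nonneg z) p, rpow_sq (norm_nonneg w) p] at h2
    linarith

private lemma main_eq {p : ℝ} (hp0 : 0 < p) {z w : ℂ} (h : z * w = 0) :
    ‖z + w‖ ^ p + ‖z - w‖ ^ p = 2 * ‖z‖ ^ p + 2 * ‖w‖ ^ p := by
  rcases mul_eq_zero.mp h with h | h <;> subst h <;>
    simp [Real.zero_rpow hp0.ne', norm_neg, two_mul]

private lemma ofReal_pow_norm {p : ℝ} (hp0 : 0 ≤ p) (z : ℂ) :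
    (‖z‖₊ : ℝ≥0∞) ^ p = ENNReal.ofReal (‖z‖ ^ p) := by
  rw [← enorm_eq_nnnorm, ← ofReal_norm, ENNReal.ofReal_rpow_of_nonneg (norm_nonneg z) hp0]

private lemma lhs_eq {p : ℝ} (hp0 : 0 ≤ p) (z w : ℂ) :
    (‖z + w‖₊ : ℝ≥0∞) ^ p + (‖z - w‖₊ : ℝ≥0∞) ^ p
      = ENNReal.ofReal (‖z + w‖ ^ p + ‖z - w‖ ^ p) := by
  rw [ofReal_pow_norm hp0, ofReal_pow_norm hp0,
    ENNReal.ofReal_add (Real.rpow_nonneg (norm_nonneg _) p) (Real.rpow_nonneg (norm_nonneg _) p)]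

private lemma rhs_eq {p : ℝ} (hp0 : 0 ≤ p) (z w : ℂ) :
    2 * (‖z‖₊ : ℝ≥0∞) ^ p + 2 * (‖w‖₊ : ℝ≥0∞) ^ p
      = ENNReal.ofReal (2 * ‖z‖ ^ p + 2 * ‖w‖ ^ p) := by
  have h2 : (2 : ℝ≥0∞) = ENNReal.ofReal 2 := by simp
  rw [ofReal_pow_norm hp0 z, ofReal_pow_norm hp0 w, h2,
    ← ENNReal.ofReal_mul (by norm_num), ← ENNReal.ofReal_mul (by norm_num),
    ← ENNReal.ofReal_add (by positivity) (by positivity)]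

private lemma enn_point_eq {p : ℝ} (hp0 : 0 < p) {z w : ℂ} (h : z * w = 0) :
    (‖z + w‖₊ : ℝ≥0∞) ^ p + (‖z - w‖₊ : ℝ≥0∞) ^ p
      = 2 * (‖z‖₊ : ℝ≥0∞) ^ p + 2 * (‖w‖₊ : ℝ≥0∞) ^ p := by
  rw [lhs_eq hp0.le, rhs_eq hp0.le, main_eq hp0 h]

private lemma enn_eq_imp {p : ℝ} (hp1 : 1 ≤ p) (hp2 : p ≠ 2) {z w : ℂ}
    (h : (‖z + w‖₊ : ℝ≥0∞) ^ p + (‖z - w‖₊ : ℝ≥0∞) ^ p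
      = 2 * (‖z‖₊ : ℝ≥0∞) ^ p + 2 * (‖w‖₊ : ℝ≥0∞) ^ p) : z * w = 0 := by
  rw [lhs_eq (by linarith), rhs_eq (by linarith)] at h
  exact main_eq_imp hp1 hp2 ((ENNReal.ofReal_eq_ofReal_iff (by positivity) (by positivity)).mp h)

private lemma enn_le {p : ℝ} (hp1 : 1 ≤ p) (hp2 : p < 2) (z w : ℂ) :
    (‖z + w‖₊ : ℝ≥0∞) ^ p + (‖z - w‖₊ : ℝ≥0∞) ^ p
      ≤ 2 * (‖z‖₊ : ℝ≥0∞) ^ p + 2 * (‖w‖₊ : ℝ≥0∞) ^ p := by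
  rw [lhs_eq (by linarith), rhs_eq (by linarith)]
  exact ENNReal.ofReal_le_ofReal (main_lt hp1 hp2 z w)

private lemma enn_ge {p : ℝ} (hp1 : 1 ≤ p) (hp2 : 2 < p) (z w : ℂ) :
    2 * (‖z‖₊ : ℝ≥0∞) ^ p + 2 * (‖w‖₊ : ℝ≥0∞) ^ p
      ≤ (‖z + w‖₊ : ℝ≥0∞) ^ p + (‖z - w‖₊ : ℝ≥0∞) ^ p := by
  rw [lhs_eq (by linarith), rhs_eq (by linarith)]
  exact ENNReal.ofReal_le_ofReal (main_gt hp2 z w)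

/-- If `φ ≤ ψ` a.e. and their lintegrals agree (and are finite), they agree a.e. -/
private lemma ae_eq_of_lintegral_eq {α : Type*} [MeasurableSpace α] {μ : Measure α}
    {φ ψ : α → ℝ≥0∞} (hφ : AEMeasurable φ μ) (hψ : AEMeasurable ψ μ)
    (hle : ∀ᵐ x ∂μ, φ x ≤ ψ x) (hfin : ∫⁻ x, φ x ∂μ ≠ ⊤)
    (heq : ∫⁻ x, φ x ∂μ = ∫⁻ x, ψ x ∂μ) : ∀ᵐ x ∂μ, φ x = ψ x := by
  have hsub : ∫⁻ x, (ψ x - φ x) ∂μ = (∫⁻ x, ψ x ∂μ) - ∫⁻ x, φ x ∂μ :=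
    lintegral_sub' hφ hfin hle
  rw [← heq, tsub_self] at hsub
  have h0 : ∀ᵐ x ∂μ, (ψ x - φ x) = 0 := (lintegral_eq_zero_iff' (hψ.sub hφ)).mp hsub
  filter_upwards [h0, hle] with x h1 h2
  exact le_antisymm h2 (tsub_eq_zero_iff_le.mp h1)

end Stmt4Aux

open Stmt4Aux

/-- For `p ∈ [1,∞)`, `p ≠ 2`, a linear isometry `T` of `L^p(μ)` is disjointness
preserving: if `ξ·η = 0` a.e., then `T(ξ)·T(η) = 0` a.e. -/
theorem stmt4 {X : Type*} [MeasurableSpace X] (μ : Measure X) (p : ℝ)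
    (hp1 : 1 ≤ p) (hp2 : p ≠ 2) [Fact (1 ≤ ENNReal.ofReal p)]
    (T : Lp ℂ (ENNReal.ofReal p) μ →ₗᵢ[ℂ] Lp ℂ (ENNReal.ofReal p) μ)
    (ξ η : Lp ℂ (ENNReal.ofReal p) μ)
    (h : ∀ᵐ x ∂μ, (ξ : X → ℂ) x * (η : X → ℂ) x = 0) :
    ∀ᵐ x ∂μ, (T ξ : X → ℂ) x * (T η : X → ℂ) x = 0 := by
  have hp0 : (0:ℝ) < p := by linarith
  have hP0 : ENNReal.ofReal p ≠ 0 := by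
    simp only [ne_eq, ENNReal.ofReal_eq_zero, not_le]; linarith
  have hPtop : ENNReal.ofReal p ≠ ⊤ := ENNReal.ofReal_ne_top
  set J : Lp ℂ (ENNReal.ofReal p) μ → ℝ≥0∞ := fun f => ∫⁻ x, (‖(f : X → ℂ) x‖₊ : ℝ≥0∞) ^ p ∂μ with hJdef
  have hm : ∀ f : Lp ℂ (ENNReal.ofReal p) μ, AEMeasurable (fun x => (f : X → ℂ) x) μ :=
    fun f => (Lp.aestronglyMeasurable f).aemeasurable
  have hJnorm : ∀ f : Lp ℂ (ENNReal.ofReal p) μ, eLpNorm (f : X → ℂ) (ENNReal.ofReal p) μ = (J f) ^ (1/p) := by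
    intro f
    rw [eLpNorm_eq_lintegral_rpow_enorm_toReal hP0 hPtop]
    simp only [ENNReal.toReal_ofReal hp0.le, hJdef, one_div, enorm_eq_nnnorm]
  have hJfin : ∀ f : Lp ℂ (ENNReal.ofReal p) μ, J f ≠ ⊤ := by
    intro f hcontra
    have hne := Lp.eLpNorm_ne_top f
    rw [hJnorm f, hcontra, ENNReal.top_rpow_of_pos (by positivity)] at hne
    exact hne rfl
  have hJT : ∀ f : Lp ℂ (ENNReal.ofReal p) μ, J (T f) = J f := by
    intro f
    have hnorm : ‖T f‖ = ‖f‖ := T.norm_map f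
    rw [Lp.norm_def, Lp.norm_def] at hnorm
    have heq : eLpNorm ((T f : Lp ℂ (ENNReal.ofReal p) μ) : X → ℂ) (ENNReal.ofReal p) μ = eLpNorm (f : X → ℂ) (ENNReal.ofReal p) μ :=
      (ENNReal.toReal_eq_toReal_iff' (Lp.eLpNorm_ne_top _) (Lp.eLpNorm_ne_top _)).mp hnorm
    rw [hJnorm, hJnorm] at heq
    exact ENNReal.rpow_left_injective (by positivity : (1:ℝ)/p ≠ 0) heq
  -- notation for the four functions
  set u : X → ℂ := fun x => (T ξ : X → ℂ) x with hudef
  set v : X → ℂ := fun x => (T η : X → ℂ) x with hvdef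
  set f : X → ℂ := fun x => (ξ : X → ℂ) x with hfdef
  set g : X → ℂ := fun x => (η : X → ℂ) x with hgdef
  have hmu : AEMeasurable u μ := hm (T ξ)
  have hmv : AEMeasurable v μ := hm (T η)
  have hmf : AEMeasurable f μ := hm ξ
  have hmg : AEMeasurable g μ := hm η
  -- a.e. identifications of coercions
  have hcoe_add : ((T (ξ + η) : Lp ℂ (ENNReal.ofReal p) μ) : X → ℂ) =ᵐ[μ] fun x => u x + v x := by
    rw [T.map_add]
    filter_upwards [Lp.coeFn_add (T ξ) (T η)] with x hx using hx
  have hcoe_sub : ((T (ξ - η) : Lp ℂ (ENNReal.ofReal p) μ) : X → ℂ) =ᵐ[μ] fun x => u x - v x := by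
    rw [T.map_sub]
    filter_upwards [Lp.coeFn_sub (T ξ) (T η)] with x hx using hx
  have hcoe_add' : (((ξ + η) : Lp ℂ (ENNReal.ofReal p) μ) : X → ℂ) =ᵐ[μ] fun x => f x + g x := by
    filter_upwards [Lp.coeFn_add ξ η] with x hx using hx
  have hcoe_sub' : (((ξ - η) : Lp ℂ (ENNReal.ofReal p) μ) : X → ℂ) =ᵐ[μ] fun x => f x - g x := by
    filter_upwards [Lp.coeFn_sub ξ η] with x hx using hx
  -- measurable integrands
  have m1 : AEMeasurable (fun x => (‖u x + v x‖₊ : ℝ≥0∞) ^ p) μ :=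
    ((hmu.add hmv).enorm).pow_const p
  have m2 : AEMeasurable (fun x => (‖u x - v x‖₊ : ℝ≥0∞) ^ p) μ :=
    ((hmu.sub hmv).enorm).pow_const p
  have m3 : AEMeasurable (fun x => 2 * (‖u x‖₊ : ℝ≥0∞) ^ p) μ :=
    ((hmu.enorm).pow_const p).const_mul 2
  have m4 : AEMeasurable (fun x => 2 * (‖v x‖₊ : ℝ≥0∞) ^ p) μ :=
    ((hmv.enorm).pow_const p).const_mul 2
  -- the key integral identity
  have hI1 : ∫⁻ x, ((‖u x + v x‖₊ : ℝ≥0∞) ^ p + (‖u x - v x‖₊ : ℝ≥0∞) ^ p) ∂μ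
      = J (T (ξ + η)) + J (T (ξ - η)) := by
    rw [lintegral_add_left' m1]
    congr 1
    · exact (lintegral_congr_ae (hcoe_add.mono fun x hx => by simp only [hx])).symm
    · exact (lintegral_congr_ae (hcoe_sub.mono fun x hx => by simp only [hx])).symm
  have hI0 : J (ξ + η) + J (ξ - η)
      = ∫⁻ x, ((‖f x + g x‖₊ : ℝ≥0∞) ^ p + (‖f x - g x‖₊ : ℝ≥0∞) ^ p) ∂μ := by
    rw [lintegral_add_left' (show AEMeasurable (fun x => (‖f x + g x‖₊ : ℝ≥0∞) ^ p) μ from ((hmf.add hmg).enorm).pow_const p)]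
    congr 1
    · exact lintegral_congr_ae (hcoe_add'.mono fun x hx => by simp only [hx])
    · exact lintegral_congr_ae (hcoe_sub'.mono fun x hx => by simp only [hx])
  have hI0' : ∫⁻ x, ((‖f x + g x‖₊ : ℝ≥0∞) ^ p + (‖f x - g x‖₊ : ℝ≥0∞) ^ p) ∂μ
      = ∫⁻ x, (2 * (‖f x‖₊ : ℝ≥0∞) ^ p + 2 * (‖g x‖₊ : ℝ≥0∞) ^ p) ∂μ := by
    apply lintegral_congr_ae
    filter_upwards [h] with x hx
    exact enn_point_eq hp0 hx
  have hI2 : ∫⁻ x, (2 * (‖f x‖₊ : ℝ≥0∞) ^ p + 2 * (‖g x‖₊ : ℝ≥0∞) ^ p) ∂μ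
      = 2 * J ξ + 2 * J η := by
    rw [lintegral_add_left' (show AEMeasurable (fun x => 2 * (‖f x‖₊ : ℝ≥0∞) ^ p) μ from ((hmf.enorm).pow_const p).const_mul 2),
      lintegral_const_mul'' 2 (show AEMeasurable (fun x => (‖f x‖₊ : ℝ≥0∞) ^ p) μ from (hmf.enorm).pow_const p),
      lintegral_const_mul'' 2 (show AEMeasurable (fun x => (‖g x‖₊ : ℝ≥0∞) ^ p) μ from (hmg.enorm).pow_const p)]
  have hI2' : ∫⁻ x, (2 * (‖u x‖₊ : ℝ≥0∞) ^ p + 2 * (‖v x‖₊ : ℝ≥0∞) ^ p) ∂μ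
      = 2 * J (T ξ) + 2 * J (T η) := by
    rw [lintegral_add_left' m3,
      lintegral_const_mul'' 2 (show AEMeasurable (fun x => (‖u x‖₊ : ℝ≥0∞) ^ p) μ from (hmu.enorm).pow_const p),
      lintegral_const_mul'' 2 (show AEMeasurable (fun x => (‖v x‖₊ : ℝ≥0∞) ^ p) μ from (hmv.enorm).pow_const p)]
  have hmain : ∫⁻ x, ((‖u x + v x‖₊ : ℝ≥0∞) ^ p + (‖u x - v x‖₊ : ℝ≥0∞) ^ p) ∂μ
      = ∫⁻ x, (2 * (‖u x‖₊ : ℝ≥0∞) ^ p + 2 * (‖v x‖₊ : ℝ≥0∞) ^ p) ∂μ := by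
    rw [hI1, hJT, hJT, hI0, hI0', hI2, hI2', hJT, hJT]
  have hfin1 : ∫⁻ x, ((‖u x + v x‖₊ : ℝ≥0∞) ^ p + (‖u x - v x‖₊ : ℝ≥0∞) ^ p) ∂μ ≠ ⊤ := by
    rw [hI1]
    exact ENNReal.add_ne_top.mpr ⟨hJfin _, hJfin _⟩
  have hfin2 : ∫⁻ x, (2 * (‖u x‖₊ : ℝ≥0∞) ^ p + 2 * (‖v x‖₊ : ℝ≥0∞) ^ p) ∂μ ≠ ⊤ := by
    rw [hI2', hJT, hJT]
    exact ENNReal.add_ne_top.mpr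
      ⟨ENNReal.mul_ne_top ENNReal.ofNat_ne_top (hJfin _), ENNReal.mul_ne_top ENNReal.ofNat_ne_top (hJfin _)⟩
  -- conclude a.e. equality of the two integrands, in either case
  have hae : ∀ᵐ x ∂μ, (‖u x + v x‖₊ : ℝ≥0∞) ^ p + (‖u x - v x‖₊ : ℝ≥0∞) ^ p
      = 2 * (‖u x‖₊ : ℝ≥0∞) ^ p + 2 * (‖v x‖₊ : ℝ≥0∞) ^ p := by
    rcases lt_or_gt_of_ne hp2 with hlt | hgt
    · exact ae_eq_of_lintegral_eq (m1.add m2) (m3.add m4)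
        (Filter.Eventually.of_forall fun x => enn_le hp1 hlt (u x) (v x)) hfin1 hmain
    · have := ae_eq_of_lintegral_eq (m3.add m4) (m1.add m2)
        (Filter.Eventually.of_forall fun x => enn_ge hp1 hgt (u x) (v x)) hfin2 hmain.symm
      filter_upwards [this] with x hx using hx.symm
  filter_upwards [hae] with x hx
  exact enn_eq_imp hp1 hp2 hx
end
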